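/- Let λ be Lebesgue measure on [0,1]. For every integer N ≥ 1, the finite family ⋃_{n≤N} 𝒞_n is an N^{-1/2}-net for 𝒞 = ⋃_{n≥1} 𝒞_n in L¹(λ): every C ∈ 𝒞 satisfies λ(C Δ D) ≤ N^{-1/2} for some D ∈ ⋃_{n≤N} 𝒞_n. Consequently 𝒞 is totally bounded in L¹(λ). -/

import Mathlib

open MeasureTheory

/-- `IntClass n`: unions of fewer than `√n` closed intervals `[i/n, (i+1)/n]`,
`0 ≤ i ≤ n - 1` (intervals of order `n`), including the empty union. -/
def IntClass (n : ℕ) : Set (Set ℝ) :=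
  {C | ∃ s : Finset ℕ, s ⊆ Finset.range n ∧ (s.card : ℝ) < Real.sqrt n ∧
    C = ⋃ i ∈ s, Set.Icc ((i : ℝ) / n) (((i : ℝ) + 1) / n)}

/-- `IntClassAll = ⋃_{n ≥ 1} IntClass n`. -/
def IntClassAll : Set (Set ℝ) := {C | ∃ n : ℕ, 1 ≤ n ∧ C ∈ IntClass n}

def mkSet (n : ℕ) (s : Finset ℕ) : Set ℝ :=
  ⋃ i ∈ s, Set.Icc ((i : ℝ) / n) (((i : ℝ) + 1) / n)

lemma measure_IntClass_le {n : ℕ} (hn : 1 ≤ n) {C : Set ℝ} (hC : ∃ s : Finset ℕ, s ⊆ Finset.range n ∧ (s.card : ℝ) < Real.sqrt n ∧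
    C = ⋃ i ∈ s, Set.Icc ((i : ℝ) / n) (((i : ℝ) + 1) / n)) :
    (volume.restrict (Set.Icc (0 : ℝ) 1)) C ≤ ENNReal.ofReal (1 / Real.sqrt n) := by
  obtain ⟨s, hs, hcard, rfl⟩ := hC
  have hnpos : (0:ℝ) < n := by exact_mod_cast hn
  have hsq : (0:ℝ) < Real.sqrt n := Real.sqrt_pos.mpr hnpos
  calc (volume.restrict (Set.Icc (0 : ℝ) 1)) (⋃ i ∈ s, Set.Icc ((i : ℝ) / n) (((i : ℝ) + 1) / n))
      ≤ ∑ i ∈ s, (volume.restrict (Set.Icc (0 : ℝ) 1)) (Set.Icc ((i : ℝ) / n) (((i : ℝ) + 1) / n)) :=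
        measure_biUnion_finset_le _ _
    _ ≤ ∑ i ∈ s, ENNReal.ofReal (1 / n) := by
        refine Finset.sum_le_sum fun i _ => ?_
        calc (volume.restrict (Set.Icc (0 : ℝ) 1)) (Set.Icc ((i : ℝ) / n) (((i : ℝ) + 1) / n))
            ≤ volume (Set.Icc ((i : ℝ) / n) (((i : ℝ) + 1) / n)) :=
              Measure.restrict_le_self _
          _ = ENNReal.ofReal (1 / n) := by
              rw [Real.volume_Icc]
              congr 1
              field_simp
              ring
    _ = s.card * ENNReal.ofReal (1 / n) := by
        rw [Finset.sum_const, nsmul_eq_mul]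
    _ = ENNReal.ofReal (s.card / n) := by
        rw [← ENNReal.ofReal_natCast (s.card), ← ENNReal.ofReal_mul (by positivity)]
        ring_nf
    _ ≤ ENNReal.ofReal (1 / Real.sqrt n) := by
        apply ENNReal.ofReal_le_ofReal
        rw [div_le_div_iff₀ hnpos hsq]
        have h2 : Real.sqrt n * Real.sqrt n = n := Real.mul_self_sqrt (le_of_lt hnpos)
        nlinarith [hcard.le]

/-- under Lebesgue measure `λ` on `[0,1]`, for every `N ≥ 1` the
finite family `⋃_{n ≤ N} 𝒞ₙ` is an `N^{-1/2}`-net for `𝒞 = ⋃_{n ≥ 1} 𝒞ₙ` in `L¹(λ)`;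
consequently `𝒞` is totally bounded in `L¹(λ)`. -/
theorem stmt17 :
    (∀ N : ℕ, 1 ≤ N → ∀ C ∈ IntClassAll, ∃ D : Set ℝ,
      (∃ n : ℕ, 1 ≤ n ∧ n ≤ N ∧ D ∈ IntClass n) ∧
      (volume.restrict (Set.Icc (0 : ℝ) 1)) (symmDiff C D) ≤
        ENNReal.ofReal (1 / Real.sqrt N)) ∧
    ∀ ε : ℝ, 0 < ε → ∃ 𝒟 : Finset (Set ℝ), ∀ C ∈ IntClassAll, ∃ D ∈ 𝒟,
      (volume.restrict (Set.Icc (0 : ℝ) 1)) (symmDiff C D) ≤ ENNReal.ofReal ε := by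
  have empty_mem : ∅ ∈ IntClass 1 := by
    refine ⟨∅, by simp, by simp, by simp⟩
  have part1 : ∀ N : ℕ, 1 ≤ N → ∀ C ∈ IntClassAll, ∃ D : Set ℝ,
      (∃ n : ℕ, 1 ≤ n ∧ n ≤ N ∧ D ∈ IntClass n) ∧
      (volume.restrict (Set.Icc (0 : ℝ) 1)) (symmDiff C D) ≤
        ENNReal.ofReal (1 / Real.sqrt N) := by
    intro N hN C hC
    obtain ⟨n, hn1, hCn⟩ := hC
    by_cases h : n ≤ N
    · exact ⟨C, ⟨n, hn1, h, hCn⟩, by simp [symmDiff_self]⟩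
    · refine ⟨∅, ⟨1, le_refl 1, hN, empty_mem⟩, ?_⟩
      rw [show symmDiff C (∅ : Set ℝ) = C by simp [symmDiff_def]]
      calc (volume.restrict (Set.Icc (0 : ℝ) 1)) C ≤ ENNReal.ofReal (1 / Real.sqrt n) :=
            measure_IntClass_le hn1 hCn
        _ ≤ ENNReal.ofReal (1 / Real.sqrt N) := by
            apply ENNReal.ofReal_le_ofReal
            have hNpos : (0:ℝ) < Real.sqrt N := Real.sqrt_pos.mpr (by exact_mod_cast hN)
            apply one_div_le_one_div_of_le hNpos
            exact Real.sqrt_le_sqrt (by exact_mod_cast le_of_lt (not_le.mp h))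
  refine ⟨part1, ?_⟩
  intro ε hε
  classical
  set N : ℕ := max 1 ⌈ε⁻¹ ^ 2⌉₊ with hNdef
  have hN1 : 1 ≤ N := le_max_left _ _
  have hNge : ε⁻¹ ^ 2 ≤ (N : ℝ) := (Nat.le_ceil _).trans (Nat.cast_le.mpr (le_max_right _ _))
  have hεbound : 1 / Real.sqrt N ≤ ε := by
    have h1 : ε⁻¹ ≤ Real.sqrt N := by
      rw [show ε⁻¹ = Real.sqrt (ε⁻¹ ^ 2) from (Real.sqrt_sq (by positivity)).symm]
      exact Real.sqrt_le_sqrt hNge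
    have h2 : (0:ℝ) < ε⁻¹ := by positivity
    calc 1 / Real.sqrt N ≤ 1 / ε⁻¹ := one_div_le_one_div_of_le h2 h1
      _ = ε := by field_simp
  have hD𝒟 : ∃ 𝒟 : Finset (Set ℝ), ∀ n ≤ N, ∀ s : Finset ℕ, s ⊆ Finset.range n →
      mkSet n s ∈ 𝒟 := by
    refine ⟨(Finset.range (N+1)).biUnion (fun n => (Finset.range n).powerset.image (mkSet n)), ?_⟩
    intro n hn s hs
    rw [Finset.mem_biUnion]
    exact ⟨n, Finset.mem_range.mpr (Nat.lt_succ_of_le hn),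
      Finset.mem_image.mpr ⟨s, Finset.mem_powerset.mpr hs, rfl⟩⟩
  obtain ⟨𝒟, h𝒟⟩ := hD𝒟
  refine ⟨𝒟, ?_⟩
  intro C hC
  obtain ⟨D, ⟨n, hn1, hnN, s, hs, hcard, rfl⟩, hD⟩ := part1 N hN1 C hC
  exact ⟨_, h𝒟 n hnN s hs, le_trans (by exact hD) (ENNReal.ofReal_le_ofReal hεbound)⟩
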